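/- Let F, G : D → E be diagrams in a Grothendieck topos such that G satisfies descent (for every cartesian transformation into G, the colimit insertion squares are pullbacks), and let α : F ⟹ G be a cartesian natural transformation each of whose components is a monomorphism. Then the induced map colim F → colim G is a monomorphism. -/

import Mathlib

open CategoryTheory CategoryTheory.Limits

universe u

/-- In a Grothendieck topos, if `G` satisfies descent and `α : F ⟶ G` is a cartesian
natural transformation whose components are monomorphisms, then the induced map
`colim F ⟶ colim G` is a monomorphism. -/
theorem mono_colimMap_of_cartesian_mono_of_descent
    {C : Type u} [SmallCategory C] (J : GrothendieckTopology C)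
    [HasWeakSheafify J (Type u)] [HasColimits (Sheaf J (Type u))]
    {D : Type u} [SmallCategory D]
    (F G : D ⥤ Sheaf J (Type u))
    -- `G` satisfies descent: for any cartesian transformation `β : K ⟶ G`,
    -- the colimit-insertion squares are pullbacks
    (hdescent : ∀ (K : D ⥤ Sheaf J (Type u)) (β : K ⟶ G),
      (∀ {d e : D} (f : d ⟶ e), IsPullback (β.app d) (K.map f) (G.map f) (β.app e)) →
      ∀ d : D, IsPullback (β.app d) (colimit.ι K d) (colimit.ι G d) (colimMap β))
    (α : F ⟶ G)
    (hcart : ∀ {d e : D} (f : d ⟶ e),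
      IsPullback (α.app d) (F.map f) (G.map f) (α.app e))
    (hmono : ∀ d : D, Mono (α.app d)) :
    Mono (colimMap α) := by
  -- the descent pullback squares
  have sq : ∀ d : D, IsPullback (α.app d) (colimit.ι F d) (colimit.ι G d) (colimMap α) :=
    hdescent F α (fun {d e} f => hcart f)
  -- pointwise injectivity of α
  have hinj : ∀ (d : D) (X : Cᵒᵖ), Function.Injective ((α.app d).hom.app X) := by
    intro d X
    have := hmono d
    have h1 : Mono ((sheafToPresheaf J (Type u)).map (α.app d)) := inferInstance
    rw [NatTrans.mono_iff_mono_app] at h1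
    rw [← CategoryTheory.mono_iff_injective]
    exact h1 X
  -- pointwise pullback squares
  have psq : ∀ (d : D) (X : Cᵒᵖ), IsPullback ((α.app d).hom.app X) ((colimit.ι F d).hom.app X)
      ((colimit.ι G d).hom.app X) ((colimMap α).hom.app X) := fun d X =>
    ((sq d).map (sheafToPresheaf J (Type u))).map ((evaluation Cᵒᵖ (Type u)).obj X)
  -- colimit comparison with the presheaf colimit
  let Fp : D ⥤ Cᵒᵖ ⥤ Type u := F ⋙ sheafToPresheaf J (Type u)
  let P : Cᵒᵖ ⥤ Type u := colimit Fp
  let ad := sheafificationAdjunction J (Type u)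
  let E := colimit.cocone Fp
  have hc : IsColimit (Sheaf.sheafifyCocone (J := J) E) :=
    Sheaf.isColimitSheafifyCocone E (colimit.isColimit _)
  let e : colimit F ≅ (Sheaf.sheafifyCocone (J := J) E).pt :=
    (colimit.isColimit F).coconePointUniqueUpToIso hc
  have key : ∀ d : D, (colimit.ι F d).hom ≫ e.hom.hom
      = colimit.ι Fp d ≫ toSheafify J P := by
    intro d
    have h1 : colimit.ι F d ≫ e.hom = (Sheaf.sheafifyCocone (J := J) E).ι.app d :=
      (colimit.isColimit F).comp_coconePointUniqueUpToIso_hom hc d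
    have h2 : (Sheaf.sheafifyCocone (J := J) E).ι.app d
        = inv (ad.counit.app (F.obj d)) ≫ (presheafToSheaf J (Type u)).map (colimit.ι Fp d) := by
      simp [Sheaf.sheafifyCocone, ad, E]
    have h4 : (inv (ad.counit.app (F.obj d))).hom = ad.unit.app ((F.obj d).val) := by
      have hltr : ad.unit.app ((F.obj d).val) ≫ (ad.counit.app (F.obj d)).hom = 𝟙 _ :=
        ad.right_triangle_components (F.obj d)
      have h5 : (inv (ad.counit.app (F.obj d))).hom ≫ (ad.counit.app (F.obj d)).hom = 𝟙 _ := by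
        rw [show (inv (ad.counit.app (F.obj d))).hom ≫ (ad.counit.app (F.obj d)).hom
            = (inv (ad.counit.app (F.obj d)) ≫ ad.counit.app (F.obj d)).hom from rfl,
          IsIso.inv_hom_id]
        rfl
      have hm : Mono ((ad.counit.app (F.obj d)).hom) := by
        have : IsIso ((ad.counit.app (F.obj d)).hom) :=
          inferInstanceAs (IsIso ((sheafToPresheaf J (Type u)).map (ad.counit.app (F.obj d))))
        infer_instance
      exact (cancel_mono ((ad.counit.app (F.obj d)).hom)).1 (h5.trans hltr.symm)
    have h5 := ad.unit.naturality (colimit.ι Fp d)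
    calc (colimit.ι F d).hom ≫ e.hom.hom = (colimit.ι F d ≫ e.hom).hom := rfl
      _ = ((inv (ad.counit.app (F.obj d))).hom
            ≫ ((presheafToSheaf J (Type u)).map (colimit.ι Fp d)).hom : (F.obj d).val ⟶ (Sheaf.sheafifyCocone (J := J) E).pt.val) := by rw [h1, h2]; rfl
      _ = (ad.unit.app ((F.obj d).val)
            ≫ ((presheafToSheaf J (Type u) ⋙ sheafToPresheaf J (Type u)).map
                (colimit.ι Fp d)) : (F.obj d).val ⟶ (Sheaf.sheafifyCocone (J := J) E).pt.val) := by rw [h4]; rfl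
      _ = ((𝟭 _).map (colimit.ι Fp d) ≫ ad.unit.app P : (F.obj d).val ⟶ (Sheaf.sheafifyCocone (J := J) E).pt.val) := h5.symm
      _ = (colimit.ι Fp d ≫ toSheafify J P : (F.obj d).val ⟶ (Sheaf.sheafifyCocone (J := J) E).pt.val) := rfl
  -- pointwise injectivity of e.hom
  have einj : ∀ (Z : Cᵒᵖ), Function.Injective (e.hom.hom.app Z) := by
    intro Z a b h
    have h6 := ConcreteCategory.congr_hom (congrArg (fun (q : colimit F ⟶ colimit F) => q.hom.app Z)
      e.hom_inv_id) a
    have h7 := ConcreteCategory.congr_hom (congrArg (fun (q : colimit F ⟶ colimit F) => q.hom.app Z)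
      e.hom_inv_id) b
    simp only [ObjectProperty.FullSubcategory.comp_hom, ObjectProperty.FullSubcategory.id_hom,
      NatTrans.comp_app, NatTrans.id_app, types_comp_apply, types_id_apply] at h6 h7
    rw [← h6, ← h7, h]
  -- every section of `colimit F` locally comes from some `F d`
  have hloc : ∀ (X : Cᵒᵖ) (y : (colimit F).val.obj X),
      ∃ S : Sieve X.unop, S ∈ J X.unop ∧
        ∀ ⦃Y : C⦄ (f : Y ⟶ X.unop), S f → ∃ (d : D) (u : (F.obj d).val.obj (Opposite.op Y)),
          (colimit.ι F d).hom.app (Opposite.op Y) u = (colimit F).val.map f.op y := by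
    intro X y
    refine ⟨Presheaf.imageSieve (toSheafify J P) (e.hom.hom.app X y),
      Presheaf.imageSieve_mem J _ _, ?_⟩
    intro Y f hf
    obtain ⟨z, hz⟩ := hf
    obtain ⟨d, u, hu⟩ := Types.jointly_surjective'
        (F := Fp ⋙ (evaluation Cᵒᵖ (Type u)).obj (Opposite.op Y))
        ((colimitObjIsoColimitCompEvaluation Fp (Opposite.op Y)).hom z)
    have hz' : (colimit.ι Fp d).app (Opposite.op Y) u = z := by
      have h8 := ConcreteCategory.congr_hom (colimitObjIsoColimitCompEvaluation_ι_inv Fp d (Opposite.op Y)) u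
      dsimp at h8 hu
      rw [← h8, hu]
      simp
    refine ⟨d, u, ?_⟩
    apply einj
    have h9 := ConcreteCategory.congr_hom (congrArg (fun (q : (F.obj d).val ⟶ _) => q.app (Opposite.op Y)) (key d)) u
    dsimp at h9
    rw [h9]
    erw [types_comp_apply, hz']
    exact hz.trans (ConcreteCategory.congr_hom (e.hom.hom.naturality f.op) y).symm
  -- main argument
  apply Sheaf.mono_of_injective
  intro X x y hxy
  obtain ⟨S, hS, hSloc⟩ := hloc X y
  apply (Presieve.IsSheaf.isSeparated
      ((isSheaf_iff_isSheaf_of_type _ _).1 (colimit F).cond) _ hS).ext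
  intro Y f hf
  obtain ⟨d, u, hu⟩ := hSloc f hf
  have hcond : (colimit.ι G d).hom.app (Opposite.op Y) ((α.app d).hom.app (Opposite.op Y) u)
      = (colimMap α).hom.app (Opposite.op Y) ((colimit F).val.map f.op x) := by
    have n1 := ConcreteCategory.congr_hom ((colimMap α).hom.naturality f.op) x
    have n2 := ConcreteCategory.congr_hom ((colimMap α).hom.naturality f.op) y
    have n3 := ConcreteCategory.congr_hom (congrArg (fun (q : F.obj d ⟶ colimit G) => q.hom.app (Opposite.op Y))
      (ι_colimMap α d)) u
    exact n3.symm.trans ((congrArg ((colimMap α).hom.app (Opposite.op Y)) hu).trans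
      (n2.trans ((congrArg ((colimit G).val.map f.op) hxy.symm).trans n1.symm)))
  have hP := psq d (Opposite.op Y)
  have hw1 : (α.app d).hom.app (Opposite.op Y)
        ((PullbackCone.IsLimit.equivPullbackObj hP.isLimit).symm ⟨⟨_, _⟩, hcond⟩)
      = (α.app d).hom.app (Opposite.op Y) u :=
    PullbackCone.IsLimit.equivPullbackObj_symm_apply_fst hP.isLimit _
  have hw2 : (colimit.ι F d).hom.app (Opposite.op Y)
        ((PullbackCone.IsLimit.equivPullbackObj hP.isLimit).symm ⟨⟨_, _⟩, hcond⟩)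
      = (colimit F).val.map f.op x :=
    PullbackCone.IsLimit.equivPullbackObj_symm_apply_snd hP.isLimit _
  have hwu := hinj d _ hw1
  rw [← hw2, hwu]
  exact hu
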